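/- If n = p^m is a power of an odd prime p (with m ≥ 1), then the independence number of the 2-derangement graph satisfies α(Γ_{2,n}) = 2·(n−2)!. -/

import Mathlib

def IsKDerangement (n k : ℕ) (σ : Equiv.Perm (Fin n)) : Prop :=
  ∀ X : Finset (Fin n), X.card = k → X.image σ ≠ X

lemma IsKDerangement.inv {n k : ℕ} {σ : Equiv.Perm (Fin n)}
    (h : IsKDerangement n k σ) : IsKDerangement n k σ⁻¹ := by
  intro X hX hfix
  refine h X hX ?_
  nth_rewrite 1 [← hfix]
  rw [Finset.image_image]
  simp [Function.comp_def]

def derangementGraph (n k : ℕ) : SimpleGraph (Equiv.Perm (Fin n)) where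
  Adj σ τ := σ ≠ τ ∧ IsKDerangement n k (σ * τ⁻¹)
  symm := ⟨by
    rintro σ τ ⟨hne, h⟩
    exact ⟨hne.symm, by simpa [mul_inv_rev] using h.inv⟩⟩
  loopless := ⟨by rintro σ ⟨hne, -⟩; exact hne rfl⟩

noncomputable def numKDerangements (n k : ℕ) : ℕ :=
  Nat.card {σ : Equiv.Perm (Fin n) // IsKDerangement n k σ}

noncomputable def indepNum {V : Type*} (G : SimpleGraph V) : ℕ :=
  sSup {m | ∃ s : Finset V, (∀ a ∈ s, ∀ b ∈ s, a ≠ b → ¬ G.Adj a b) ∧ s.card = m}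

/-! ### Auxiliary material: affine permutations of a finite field -/

section AffineClique

variable {F : Type*} [Field F] [DecidableEq F]

/-- The affine permutation `x ↦ a x + b` of a field. -/
def affPerm (a : Fˣ) (b : F) : Equiv.Perm F where
  toFun x := a * x + b
  invFun y := ((a⁻¹ : Fˣ) : F) * (y - b)
  left_inv x := by
    dsimp only
    rw [add_sub_cancel_right, ← mul_assoc, ← Units.val_mul, inv_mul_cancel, Units.val_one, one_mul]
  right_inv y := by
    dsimp only
    rw [← mul_assoc, ← Units.val_mul, mul_inv_cancel, Units.val_one, one_mul, sub_add_cancel]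

@[simp] lemma affPerm_apply (a : Fˣ) (b : F) (x : F) : affPerm a b x = a * x + b := rfl

lemma affPerm_inv_apply (a : Fˣ) (b : F) (x : F) :
    (affPerm a b)⁻¹ x = ((a⁻¹ : Fˣ) : F) * (x - b) := rfl

lemma affPerm_inv_mul (a c : Fˣ) (b d : F) :
    (affPerm c d)⁻¹ * affPerm a b = affPerm (c⁻¹ * a) (((c⁻¹ : Fˣ) : F) * (b - d)) := by
  ext x
  simp only [Equiv.Perm.mul_apply, affPerm_apply, affPerm_inv_apply, Units.val_mul]
  ring

/-- An affine map with slope `≠ -1` which is not the identity fixes no 2-element set. -/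
lemma affPerm_two_derangement (hne : (-1 : F) ≠ 1) (u : Fˣ) (v : F)
    (hu : (u : F) ≠ -1) (h1 : (u : F) = 1 → v ≠ 0) :
    ∀ X : Finset F, X.card = 2 → X.image (affPerm u v) ≠ X := by
  intro X hX
  obtain ⟨x, y, hxy, rfl⟩ := Finset.card_eq_two.mp hX
  intro h
  have hfx : affPerm u v x ∈ ({x, y} : Finset F) := by
    rw [← h]; exact Finset.mem_image_of_mem _ (by simp)
  have hfy : affPerm u v y ∈ ({x, y} : Finset F) := by
    rw [← h]; exact Finset.mem_image_of_mem _ (by simp)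
  simp only [Finset.mem_insert, Finset.mem_singleton, affPerm_apply] at hfx hfy
  have hinj : (u : F) * x + v ≠ (u : F) * y + v := by
    intro he
    exact hxy ((affPerm u v).injective (by simpa using he))
  rcases hfx with hx' | hx' <;> rcases hfy with hy' | hy'
  · exact absurd (hx'.trans hy'.symm) hinj
  · by_cases hu1 : (u : F) = 1
    · exact h1 hu1 (by linear_combination hx' - hu1 * x)
    · refine hxy ?_
      have h0 : ((u : F) - 1) * (x - y) = 0 := by linear_combination hx' - hy'
      rcases mul_eq_zero.mp h0 with h' | h'
      · exact absurd (by linear_combination h') hu1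
      · exact sub_eq_zero.mp h'
  · have h0 : ((u : F) + 1) * (x - y) = 0 := by linear_combination hx' - hy'
    rcases mul_eq_zero.mp h0 with h' | h'
    · exact hu (by linear_combination h')
    · exact hxy (sub_eq_zero.mp h')
  · exact absurd (hx'.trans hy'.symm) hinj

end AffineClique

section Transport

lemma permCongr_mul {α β : Type*} (e : α ≃ β) (f g : Equiv.Perm α) :
    e.permCongr (f * g) = e.permCongr f * e.permCongr g := by
  ext x
  simp [Equiv.permCongr_apply, Equiv.Perm.mul_apply]

lemma permCongr_inv {α β : Type*} (e : α ≃ β) (f : Equiv.Perm α) :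
    e.permCongr f⁻¹ = (e.permCongr f)⁻¹ := by
  apply eq_inv_of_mul_eq_one_left
  rw [← permCongr_mul, inv_mul_cancel]
  ext x
  simp [Equiv.permCongr_apply]

lemma isKDerangement_permCongr {F : Type*} {n : ℕ} [DecidableEq F] (e : F ≃ Fin n)
    (σ : Equiv.Perm F) (h : ∀ X : Finset F, X.card = 2 → X.image σ ≠ X) :
    IsKDerangement n 2 (e.permCongr σ) := by
  intro X hX hfix
  apply h (X.image e.symm) (by rw [Finset.card_image_of_injective _ e.symm.injective, hX])
  rw [Finset.image_image]
  have hc : (⇑σ ∘ ⇑e.symm) = ⇑e.symm ∘ ⇑(e.permCongr σ) := by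
    ext x; simp [Equiv.permCongr_apply]
  rw [hc, ← Finset.image_image, hfix]

end Transport

open Finset Equiv

set_option maxHeartbeats 1600000 in
/-- If `n = p^m` is a power of an odd prime, then the independence number of the
`2`-derangement graph equals `2·(n-2)!`. -/
theorem indepNum_derangementGraph_two (n p m : ℕ) (hp : p.Prime) (hodd : Odd p)
    (hm : 1 ≤ m) (hn : n = p ^ m) :
    indepNum (derangementGraph n 2) = 2 * (n - 2).factorial := by
  classical
  haveI : Fact p.Prime := ⟨hp⟩
  have hp2 : p ≠ 2 := by rintro rfl; exact (Nat.not_odd_iff_even.mpr even_two) hodd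
  have hp3 : 3 ≤ p := by have := hp.two_le; omega
  have hn3 : 3 ≤ n := by
    have : p ≤ p ^ m := Nat.le_self_pow (by omega) p
    omega
  -- the two distinguished points
  obtain ⟨x0, x1, hx01⟩ : ∃ a b : Fin n, a ≠ b :=
    ⟨⟨0, by omega⟩, ⟨1, by omega⟩, by simp [Fin.ext_iff]⟩
  set P : Finset (Fin n) := {x0, x1} with hPdef
  have hPcard : P.card = 2 := Finset.card_pair hx01
  -- lower bound : the setwise stabilizer of `P`
  set s0 : Finset (Equiv.Perm (Fin n)) :=
    univ.filter (fun σ => P.image σ = P) with hs0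
  have hpair : ∀ σ : Equiv.Perm (Fin n),
      P.image σ = P ↔ (σ x0 = x0 ∧ σ x1 = x1) ∨ (σ x0 = x1 ∧ σ x1 = x0) := by
    intro σ
    constructor
    · intro h
      have h0 : σ x0 ∈ P := by rw [← h]; exact Finset.mem_image_of_mem _ (by simp [hPdef])
      have h1 : σ x1 ∈ P := by rw [← h]; exact Finset.mem_image_of_mem _ (by simp [hPdef])
      have hne : σ x0 ≠ σ x1 := fun hc => hx01 (σ.injective hc)
      simp only [hPdef, Finset.mem_insert, Finset.mem_singleton] at h0 h1
      rcases h0 with h0 | h0 <;> rcases h1 with h1 | h1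
      · exact absurd (h0.trans h1.symm) hne
      · exact Or.inl ⟨h0, h1⟩
      · exact Or.inr ⟨h0, h1⟩
      · exact absurd (h0.trans h1.symm) hne
    · rintro (⟨h0, h1⟩ | ⟨h0, h1⟩) <;>
        simp [hPdef, Finset.image_insert, Finset.image_singleton, h0, h1, Finset.pair_comm]
  have hs0indep : ∀ a ∈ s0, ∀ b ∈ s0, a ≠ b → ¬ (derangementGraph n 2).Adj a b := by
    intro a ha b hb hab hadj
    obtain ⟨-, hD⟩ := hadj
    apply hD P hPcard
    have ha' : P.image a = P := (Finset.mem_filter.mp ha).2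
    have hb' : P.image b = P := (Finset.mem_filter.mp hb).2
    have hbinv : P.image ⇑b⁻¹ = P := by
      conv_lhs => rw [← hb']
      rw [Finset.image_image]
      simp [Function.comp_def]
    calc P.image ⇑(a * b⁻¹) = (P.image ⇑b⁻¹).image ⇑a := by
            rw [Finset.image_image]; rfl
      _ = P := by rw [hbinv, ha']
  -- cardinality of the stabilizer
  set T : Finset (Equiv.Perm (Fin n)) :=
    univ.filter (fun σ => σ x0 = x0 ∧ σ x1 = x1) with hT
  have hTcard : T.card = (n - 2).factorial := by
    have e1 : {σ : Equiv.Perm (Fin n) // σ x0 = x0 ∧ σ x1 = x1} ≃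
        {σ : Equiv.Perm (Fin n) // ∀ a, ¬(a ≠ x0 ∧ a ≠ x1) → σ a = a} := by
      apply Equiv.subtypeEquivRight
      intro σ
      constructor
      · rintro ⟨h0, h1⟩ a ha
        rcases not_and_or.mp ha with h | h
        · rw [not_ne_iff.mp h]; exact h0
        · rw [not_ne_iff.mp h]; exact h1
      · intro h
        exact ⟨h x0 (by simp), h x1 (by simp)⟩
    have e2 : {σ : Equiv.Perm (Fin n) // ∀ a, ¬(a ≠ x0 ∧ a ≠ x1) → σ a = a} ≃
        Equiv.Perm {a : Fin n // a ≠ x0 ∧ a ≠ x1} :=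
      (Equiv.Perm.subtypeEquivSubtypePerm (fun a : Fin n => a ≠ x0 ∧ a ≠ x1)).symm
    have hsub : Fintype.card {a : Fin n // a ≠ x0 ∧ a ≠ x1} = n - 2 := by
      rw [Fintype.card_subtype]
      have hflt : univ.filter (fun a : Fin n => a ≠ x0 ∧ a ≠ x1) = univ \ {x0, x1} := by
        ext a
        simp [not_or]
      rw [hflt, Finset.card_sdiff_of_subset (Finset.subset_univ _), Finset.card_pair hx01,
        Finset.card_univ, Fintype.card_fin]
    calc T.card = Fintype.card {σ : Equiv.Perm (Fin n) // σ x0 = x0 ∧ σ x1 = x1} :=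
          (Fintype.card_subtype _).symm
      _ = Fintype.card (Equiv.Perm {a : Fin n // a ≠ x0 ∧ a ≠ x1}) :=
          Fintype.card_congr (e1.trans e2)
      _ = (n - 2).factorial := by rw [Fintype.card_perm, hsub]
  have hs0eq : s0 = T ∪ T.image (fun τ => Equiv.swap x0 x1 * τ) := by
    ext σ
    simp only [hs0, hT, Finset.mem_filter, Finset.mem_univ, true_and, Finset.mem_union,
      Finset.mem_image, hpair σ]
    constructor
    · rintro (⟨h0, h1⟩ | ⟨h0, h1⟩)
      · exact Or.inl ⟨h0, h1⟩
      · refine Or.inr ⟨Equiv.swap x0 x1 * σ, ⟨?_, ?_⟩, ?_⟩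
        · simp [Equiv.Perm.mul_apply, h0, Equiv.swap_apply_right]
        · simp [Equiv.Perm.mul_apply, h1, Equiv.swap_apply_left]
        · rw [← mul_assoc, Equiv.swap_mul_self, one_mul]
    · rintro (⟨h0, h1⟩ | ⟨τ, ⟨h0, h1⟩, rfl⟩)
      · exact Or.inl ⟨h0, h1⟩
      · refine Or.inr ⟨?_, ?_⟩
        · simp [Equiv.Perm.mul_apply, h0, Equiv.swap_apply_left]
        · simp [Equiv.Perm.mul_apply, h1, Equiv.swap_apply_right]
  have hdisjT : Disjoint T (T.image (fun τ => Equiv.swap x0 x1 * τ)) := by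
    rw [Finset.disjoint_left]
    rintro σ hσ hσ'
    obtain ⟨h0, -⟩ := (Finset.mem_filter.mp hσ).2
    obtain ⟨τ, hτ, rfl⟩ := Finset.mem_image.mp hσ'
    obtain ⟨h0', -⟩ := (Finset.mem_filter.mp hτ).2
    apply hx01
    have hx : (Equiv.swap x0 x1 * τ) x0 = x1 := by
      simp [Equiv.Perm.mul_apply, h0', Equiv.swap_apply_left]
    rw [h0] at hx
    exact hx
  have hs0card : s0.card = 2 * (n - 2).factorial := by
    rw [hs0eq, Finset.card_union_of_disjoint hdisjT,
      Finset.card_image_of_injective _ (mul_right_injective (Equiv.swap x0 x1)), hTcard]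
    ring
  -- the set whose sSup we compute
  set S : Set ℕ := {m | ∃ s : Finset (Equiv.Perm (Fin n)),
      (∀ a ∈ s, ∀ b ∈ s, a ≠ b → ¬ (derangementGraph n 2).Adj a b) ∧ s.card = m} with hS
  have hmem : 2 * (n - 2).factorial ∈ S := ⟨s0, hs0indep, hs0card⟩
  -- the field
  set F := GaloisField p m with hF
  haveI : Fintype F := Fintype.ofFinite F
  have hFcard : Fintype.card F = n := by
    rw [← Nat.card_eq_fintype_card, hF, GaloisField.card p m (by omega), hn]
  set e : F ≃ Fin n := Fintype.equivFinOfCardEq hFcard with he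
  have hneF : (-1 : F) ≠ 1 := by
    intro h
    have h2 : ((2 : ℕ) : F) = 0 := by push_cast; linear_combination -h
    rw [CharP.cast_eq_zero_iff F p] at h2
    have := Nat.le_of_dvd (by norm_num) h2
    omega
  -- the half-set of slopes
  set A : Finset Fˣ := univ.filter (fun a : Fˣ => e (a : F) < e (-(a : F))) with hA
  have hanegself : ∀ a : Fˣ, (a : F) ≠ -(a : F) := by
    intro a h
    have h2 : (2 : F) * (a : F) = 0 := by linear_combination h
    rcases mul_eq_zero.mp h2 with h' | h'
    · exact hneF (by linear_combination -h')
    · exact a.ne_zero h'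
  set B : Finset Fˣ := univ.filter (fun a : Fˣ => e (-(a : F)) < e ((a : F))) with hB
  have hunion : A ∪ B = univ := by
    ext a
    simp only [hA, hB, Finset.mem_union, Finset.mem_filter, Finset.mem_univ, true_and, iff_true]
    rcases lt_trichotomy (e (a : F)) (e (-(a : F))) with h | h | h
    · exact Or.inl h
    · exact absurd (e.injective h) (hanegself a)
    · exact Or.inr h
  have hdisjAB : Disjoint A B := by
    rw [Finset.disjoint_left]
    intro a ha hb
    exact absurd (Finset.mem_filter.mp hb).2 (asymm (Finset.mem_filter.mp ha).2)
  have hBA : B = A.image (fun a => -a) := by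
    ext a
    simp only [hA, hB, Finset.mem_filter, Finset.mem_univ, true_and, Finset.mem_image]
    constructor
    · intro h
      exact ⟨-a, by simpa using h, by simp⟩
    · rintro ⟨b, hb, rfl⟩
      simpa using hb
  have hAcard : 2 * A.card = n - 1 := by
    have hc1 : A.card + B.card = Fintype.card Fˣ := by
      rw [← Finset.card_union_of_disjoint hdisjAB, hunion, Finset.card_univ]
    have hc2 : B.card = A.card := by
      rw [hBA, Finset.card_image_of_injective _ neg_injective]
    rw [Fintype.card_units, hFcard] at hc1
    omega
  -- the clique
  set Φ : Fˣ × F → Equiv.Perm (Fin n) := fun ab => e.permCongr (affPerm ab.1 ab.2) with hΦ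
  have hΦinj : Function.Injective Φ := by
    rintro ⟨a, b⟩ ⟨c, d⟩ h
    have h' : affPerm a b = affPerm (F := F) c d := e.permCongr.injective h
    have hb : b = d := by simpa using DFunLike.congr_fun h' 0
    have ha : (a : F) = (c : F) := by
      have := DFunLike.congr_fun h' 1
      simp only [affPerm_apply, mul_one, hb] at this
      exact add_right_cancel this
    exact Prod.ext (Units.ext ha) hb
  set C : Finset (Equiv.Perm (Fin n)) := (A ×ˢ (univ : Finset F)).image Φ with hC
  have hCcard : C.card = A.card * n := by
    rw [hC, Finset.card_image_of_injective _ hΦinj, Finset.card_product, Finset.card_univ, hFcard]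
  have hclique : ∀ σ ∈ C, ∀ τ ∈ C, σ ≠ τ → IsKDerangement n 2 (τ⁻¹ * σ) := by
    intro σ hσ τ hτ hst
    obtain ⟨⟨a, b⟩, hab, rfl⟩ := Finset.mem_image.mp hσ
    obtain ⟨⟨c, d⟩, hcd, rfl⟩ := Finset.mem_image.mp hτ
    obtain ⟨haA, -⟩ := Finset.mem_product.mp hab
    obtain ⟨hcA, -⟩ := Finset.mem_product.mp hcd
    have hform : (Φ (c, d))⁻¹ * Φ (a, b) =
        e.permCongr (affPerm (c⁻¹ * a) (((c⁻¹ : Fˣ) : F) * (b - d))) := by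
      rw [hΦ]
      simp only
      rw [← permCongr_inv, ← _root_.permCongr_mul, affPerm_inv_mul]
    rw [hform]
    apply isKDerangement_permCongr
    apply affPerm_two_derangement hneF
    · intro hslope
      have hval : ((c : F))⁻¹ * (a : F) = -1 := by
        rw [← Units.val_inv_eq_inv_val, ← Units.val_mul]; exact hslope
      have hac : (a : F) = -(c : F) := by
        rw [inv_mul_eq_iff_eq_mul₀ c.ne_zero] at hval
        linear_combination hval
      have h1 : e ((a : F)) < e (-((a : F))) := (Finset.mem_filter.mp haA).2
      have h2 : e ((c : F)) < e (-((c : F))) := (Finset.mem_filter.mp hcA).2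
      rw [hac, neg_neg] at h1
      exact absurd h2 (asymm h1)
    · intro hslope hv
      have hval : ((c : F))⁻¹ * (a : F) = 1 := by
        rw [← Units.val_inv_eq_inv_val, ← Units.val_mul]; exact hslope
      have hac : (a : F) = (c : F) := by
        rw [inv_mul_eq_iff_eq_mul₀ c.ne_zero] at hval
        linear_combination hval
      have hbd : b = d := by
        have hc0 : (((c⁻¹ : Fˣ) : F)) ≠ 0 := Units.ne_zero _
        have := (mul_eq_zero.mp hv).resolve_left hc0
        exact sub_eq_zero.mp this
      exact hst (by rw [show ((a, b) : Fˣ × F) = (c, d) from Prod.ext (Units.ext hac) hbd])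
  -- upper bound via the clique
  have hub : ∀ b ∈ S, b ≤ 2 * (n - 2).factorial := by
    rintro b ⟨s, hindep, rfl⟩
    have hinj : Set.InjOn (fun x : Equiv.Perm (Fin n) × Equiv.Perm (Fin n) => x.1 * x.2)
        (↑(C ×ˢ s) : Set _) := by
      rintro ⟨c, i⟩ hci ⟨c', i'⟩ hci' h
      simp only [Finset.coe_product, Set.mem_prod, Finset.mem_coe] at hci hci'
      simp only at h
      by_cases hii' : i = i'
      · subst hii'
        have : c = c' := mul_right_cancel h
        rw [this]
      · exfalso
        have hcc' : c ≠ c' := by rintro rfl; exact hii' (mul_left_cancel h)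
        have hD := hclique c hci.1 c' hci'.1 hcc'
        have heq : c'⁻¹ * c = i' * i⁻¹ := by
          calc c'⁻¹ * c = c'⁻¹ * (c * i) * i⁻¹ := by group
            _ = c'⁻¹ * (c' * i') * i⁻¹ := by rw [h]
            _ = i' * i⁻¹ := by group
        exact hindep i' hci'.2 i hci.2 (Ne.symm hii') ⟨Ne.symm hii', heq ▸ hD⟩
    have hcard : (C ×ˢ s).card ≤ (Finset.univ : Finset (Equiv.Perm (Fin n))).card :=
      Finset.card_le_card_of_injOn (fun x => x.1 * x.2) (fun x _ => Finset.mem_univ _) hinj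
    rw [Finset.card_product, Finset.card_univ, Fintype.card_perm, Fintype.card_fin,
      hCcard] at hcard
    obtain ⟨k, hk⟩ : ∃ k, n = k + 2 := ⟨n - 2, by omega⟩
    have hAcard' : 2 * A.card = k + 1 := by omega
    obtain ⟨sc, hsc⟩ : ∃ sc, s.card = sc := ⟨_, rfl⟩
    rw [hsc] at hcard ⊢
    rw [hk] at hcard ⊢
    have hfact : (k + 2).factorial = (k + 2) * ((k + 1) * k.factorial) := by
      show (k + 1 + 1).factorial = _
      rw [Nat.factorial_succ, Nat.factorial_succ]
    have key : ((k + 1) * (k + 2)) * sc ≤ ((k + 1) * (k + 2)) * (2 * k.factorial) := by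
      calc ((k + 1) * (k + 2)) * sc = 2 * (A.card * (k + 2) * sc) := by
            rw [← hAcard']; ring
        _ ≤ 2 * (k + 2).factorial := by
            exact Nat.mul_le_mul_left 2 hcard
        _ = ((k + 1) * (k + 2)) * (2 * k.factorial) := by rw [hfact]; ring
    have hle := Nat.le_of_mul_le_mul_left key (by positivity)
    simpa using hle
  -- conclusion
  apply le_antisymm
  · exact csSup_le ⟨_, hmem⟩ hub
  · exact le_csSup ⟨_, hub⟩ hmem
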